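/- arXiv:1304.7376 — 2 statements merged into one kernel-verified Lean document; each statement's English description precedes it below -/
import Mathlib

section
/- The function R(t,s) = (1/2)(t^{2H} + s^{2H} - |t-s|^{2H}) on [0,1]² is positive semidefinite for H ∈ (0,1]: for any finite collection of times t_1,...,t_n ∈ [0,1] and reals c_1,...,c_n, one has Σ_{i,j} c_i c_j R(t_i, t_j) ≥ 0. -/
open MeasureTheory Real Set

namespace FbmAux

/-- The spectral kernel `(1 - cos (x*l)) * l^(-1-α)`. -/
noncomputable def ker (α x l : ℝ) : ℝ := (1 - Real.cos (x * l)) * l ^ (-1 - α)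

lemma ker_nonneg (α x : ℝ) {l : ℝ} (hl : 0 < l) : 0 ≤ ker α x l :=
  mul_nonneg (by linarith [Real.cos_le_one (x * l)]) (Real.rpow_nonneg hl.le _)

lemma ker_contOn (α x : ℝ) : ContinuousOn (ker α x) (Ioi 0) := by
  apply ContinuousOn.mul
  · exact (continuous_const.sub (Real.continuous_cos.comp (continuous_const.mul
      continuous_id))).continuousOn
  · exact fun l hl => (continuousAt_id.rpow_const (Or.inl (ne_of_gt hl))).continuousWithinAt

lemma integrable_ker {α : ℝ} (hα : 0 < α) (hα2 : α < 2) (x : ℝ) :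
    IntegrableOn (ker α x) (Ioi 0) := by
  have hunion : Ioi (0:ℝ) = Ioc 0 1 ∪ Ioi 1 := (Ioc_union_Ioi_eq_Ioi (by norm_num)).symm
  have h1 : IntegrableOn (ker α x) (Ioc 0 1) := by
    have hint : IntegrableOn (fun l : ℝ => x ^ 2 / 2 * l ^ (1 - α)) (Ioc 0 1) := by
      apply Integrable.const_mul
      exact (intervalIntegrable_iff_integrableOn_Ioc_of_le (by norm_num : (0:ℝ) ≤ 1)).mp
        (intervalIntegral.intervalIntegrable_rpow' (by linarith))
    refine hint.mono' (((ker_contOn α x).mono Ioc_subset_Ioi_self).aestronglyMeasurable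
      measurableSet_Ioc) ?_
    filter_upwards [ae_restrict_mem measurableSet_Ioc] with l hl
    have hl0 : 0 < l := hl.1
    rw [Real.norm_eq_abs, abs_of_nonneg (ker_nonneg α x hl0)]
    have hcos : 1 - Real.cos (x * l) ≤ (x * l) ^ 2 / 2 := by
      have := Real.one_sub_sq_div_two_le_cos (x := x * l); linarith
    have hW : (0:ℝ) ≤ l ^ (-1 - α) := Real.rpow_nonneg hl0.le _
    calc ker α x l ≤ (x * l) ^ 2 / 2 * l ^ (-1 - α) := mul_le_mul_of_nonneg_right hcos hW
      _ = x ^ 2 / 2 * (l ^ ((2:ℕ):ℝ) * l ^ (-1 - α)) := by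
          rw [Real.rpow_natCast l 2, mul_pow]; ring
      _ = x ^ 2 / 2 * l ^ (1 - α) := by
          congr 1
          rw [← Real.rpow_add hl0]
          congr 1
          push_cast; ring
  have h2 : IntegrableOn (ker α x) (Ioi 1) := by
    have hint : IntegrableOn (fun l : ℝ => 2 * l ^ (-1 - α)) (Ioi 1) :=
      (integrableOn_Ioi_rpow_of_lt (by linarith) one_pos).const_mul 2
    refine hint.mono' (((ker_contOn α x).mono fun l (hl : (1:ℝ) < l) => (lt_trans one_pos hl : (0:ℝ) < l)).aestronglyMeasurable
      measurableSet_Ioi) ?_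
    filter_upwards [ae_restrict_mem measurableSet_Ioi] with l hl
    have hl0 : (0:ℝ) < l := lt_trans one_pos hl
    rw [Real.norm_eq_abs, abs_of_nonneg (ker_nonneg α x hl0)]
    have hW : (0:ℝ) ≤ l ^ (-1 - α) := Real.rpow_nonneg hl0.le _
    have hcos : 1 - Real.cos (x * l) ≤ 2 := by linarith [Real.neg_one_le_cos (x * l)]
    exact mul_le_mul_of_nonneg_right hcos hW
  rw [hunion]; exact h1.union h2

lemma ker_scale {α : ℝ} {x : ℝ} (hx : 0 < x) :
    ∫ l in Ioi (0:ℝ), ker α x l = x ^ α * ∫ l in Ioi (0:ℝ), ker α 1 l := by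
  have h := integral_comp_mul_left_Ioi (ker α 1) 0 hx
  rw [mul_zero] at h
  have key : ∀ l ∈ Ioi (0:ℝ), ker α x l = x ^ (1 + α) * ker α 1 (x * l) := by
    intro l hl
    simp only [ker, one_mul]
    rw [Real.mul_rpow hx.le (le_of_lt hl)]
    rw [show x ^ (1+α) * ((1 - Real.cos (x*l)) * (x ^ (-1-α) * l ^ (-1-α)))
        = x ^ (1+α) * x ^ (-1-α) * ((1 - Real.cos (x*l)) * l ^ (-1-α)) by ring]
    rw [← Real.rpow_add hx]
    norm_num
  rw [setIntegral_congr_fun measurableSet_Ioi key, integral_const_mul, h, smul_eq_mul]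
  rw [← mul_assoc, show x ^ (1+α) * x⁻¹ = x ^ (1+α) * x ^ (-1:ℝ) by rw [Real.rpow_neg_one],
    ← Real.rpow_add hx]
  norm_num

lemma I1_pos {α : ℝ} (hα : 0 < α) (hα2 : α < 2) :
    0 < ∫ l in Ioi (0:ℝ), ker α 1 l := by
  have hint := integrable_ker hα hα2 1
  have hsub : IntegrableOn (ker α 1) (Ioc 1 3) :=
    hint.mono_set (fun l hl => lt_trans one_pos hl.1)
  set ε : ℝ := (1 - Real.cos 1) * 3 ^ (-1 - α) with hε
  have hεpos : 0 < ε := by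
    apply mul_pos
    · linarith [Real.cos_one_le]
    · exact Real.rpow_pos_of_pos (by norm_num) _
  have hlow : ∀ l ∈ Ioc (1:ℝ) 3, ε ≤ ker α 1 l := by
    intro l hl
    have hl1 : (1:ℝ) ≤ l := hl.1.le
    have hl0 : (0:ℝ) < l := lt_of_lt_of_le one_pos hl1
    have hcos : Real.cos l ≤ Real.cos 1 := by
      apply Real.cos_le_cos_of_nonneg_of_le_pi (by norm_num) _ hl1
      linarith [Real.pi_gt_d6, hl.2]
    have hw : (3:ℝ) ^ (-1 - α) ≤ l ^ (-1 - α) :=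
      Real.rpow_le_rpow_of_nonpos hl0 hl.2 (by linarith)
    have h1 : 0 < 1 - Real.cos 1 := by linarith [Real.cos_one_le]
    calc ε ≤ (1 - Real.cos 1) * l ^ (-1 - α) := mul_le_mul_of_nonneg_left hw h1.le
      _ ≤ (1 - Real.cos l) * l ^ (-1 - α) := by
          apply mul_le_mul_of_nonneg_right (by linarith) (Real.rpow_nonneg hl0.le _)
      _ = ker α 1 l := by rw [ker, one_mul]
  have hmeas : volume (Ioc (1:ℝ) 3) ≠ ⊤ := by simp
  have h1 := setIntegral_ge_of_const_le measurableSet_Ioc hmeas hlow hsub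
  have h2 : ∫ l in Ioc (1:ℝ) 3, ker α 1 l ≤ ∫ l in Ioi (0:ℝ), ker α 1 l := by
    apply setIntegral_mono_set hint
    · filter_upwards [ae_restrict_mem measurableSet_Ioi] with l hl
      exact ker_nonneg α 1 hl
    · exact HasSubset.Subset.eventuallyLE (fun l hl => lt_trans one_pos hl.1)
  have hvol : volume.real (Ioc (1:ℝ) 3) = 2 := by
    rw [measureReal_def, Real.volume_Ioc]; norm_num
  rw [hvol, smul_eq_mul] at h1
  nlinarith

lemma ker_abs (α x : ℝ) : ∀ l ∈ Ioi (0:ℝ), ker α |x| l = ker α x l := by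
  intro l hl
  simp only [ker]
  have h : |x| * l = |x * l| := by rw [abs_mul, abs_of_pos (show (0:ℝ) < l from hl)]
  rw [h, Real.cos_abs]

/-- Representation `∫ ker α x = x^α * I1` for `x ≥ 0`. -/
lemma ker_repr {α : ℝ} (hα : 0 < α) {x : ℝ} (hx : 0 ≤ x) :
    x ^ α * ∫ l in Ioi (0:ℝ), ker α 1 l = ∫ l in Ioi (0:ℝ), ker α x l := by
  rcases eq_or_lt_of_le hx with h | h
  · have hz : ∀ l ∈ Ioi (0:ℝ), ker α x l = 0 := by
      intro l hl
      simp [ker, ← h]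
    rw [setIntegral_congr_fun measurableSet_Ioi hz, ← h, Real.zero_rpow (ne_of_gt hα)]
    simp
  · rw [ker_scale h]

set_option maxHeartbeats 1000000 in
lemma sum_nonneg_aux {α : ℝ} (hα : 0 < α) (hα2 : α < 2) {n : ℕ} (t c : Fin n → ℝ)
    (ht : ∀ i, 0 ≤ t i) :
    0 ≤ ∑ i, ∑ j, c i * c j * ((t i) ^ α + (t j) ^ α - |t i - t j| ^ α) := by
  set I1 : ℝ := ∫ l in Ioi (0:ℝ), ker α 1 l with hI1
  have hI1pos : 0 < I1 := I1_pos hα hα2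
  rw [← mul_nonneg_iff_of_pos_left hI1pos]
  have hki : ∀ x : ℝ, IntegrableOn (ker α x) (Ioi 0) := fun x => integrable_ker hα hα2 x
  set f : Fin n → Fin n → ℝ → ℝ := fun i j l =>
    c i * c j * (ker α (t i) l + ker α (t j) l - ker α (t i - t j) l) with hf
  have hfint : ∀ i j, IntegrableOn (f i j) (Ioi 0) := fun i j =>
    ((((hki (t i)).add (hki (t j))).sub (hki (t i - t j))).const_mul _)
  have hterm : ∀ i j, I1 * (c i * c j * ((t i) ^ α + (t j) ^ α - |t i - t j| ^ α))
      = ∫ l in Ioi (0:ℝ), f i j l := by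
    intro i j
    have e1 := ker_repr hα (ht i)
    have e2 := ker_repr hα (ht j)
    have e3 : |t i - t j| ^ α * I1 = ∫ l in Ioi (0:ℝ), ker α (t i - t j) l := by
      rw [ker_repr hα (abs_nonneg _), setIntegral_congr_fun measurableSet_Ioi
        (ker_abs α (t i - t j))]
    have hadd : IntegrableOn (fun l => ker α (t i) l + ker α (t j) l) (Ioi 0) :=
      (hki (t i)).add (hki (t j))
    simp only [hf]
    rw [integral_const_mul, integral_sub hadd (hki (t i - t j)),
      integral_add (hki (t i)) (hki (t j)), ← e1, ← e2, ← e3]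
    ring
  have hswap : I1 * (∑ i, ∑ j, c i * c j * ((t i) ^ α + (t j) ^ α - |t i - t j| ^ α))
      = ∫ l in Ioi (0:ℝ), ∑ i, ∑ j, f i j l := by
    rw [Finset.mul_sum]
    rw [integral_finset_sum Finset.univ (fun i _ => integrable_finset_sum _
      (fun j _ => hfint i j))]
    refine Finset.sum_congr rfl fun i _ => ?_
    rw [Finset.mul_sum, integral_finset_sum Finset.univ (fun j _ => hfint i j)]
    exact Finset.sum_congr rfl fun j _ => hterm i j
  rw [hswap]
  apply setIntegral_nonneg measurableSet_Ioi
  intro l hl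
  have hl0 : (0:ℝ) < l := hl
  have hw : (0:ℝ) ≤ l ^ (-1 - α) := Real.rpow_nonneg hl0.le _
  have hptkey : ∀ i j, f i j l =
      ((c i * (1 - Real.cos (t i * l))) * (c j * (1 - Real.cos (t j * l)))
        + (c i * Real.sin (t i * l)) * (c j * Real.sin (t j * l))) * l ^ (-1 - α) := by
    intro i j
    simp only [hf, ker]
    rw [sub_mul (t i) (t j) l, Real.cos_sub]
    ring
  have hsq : ∀ (A : Fin n → ℝ),
      ∑ i, ∑ j, (A i * A j) * l ^ (-1 - α) = (∑ i, A i) ^ 2 * l ^ (-1 - α) := by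
    intro A
    rw [sq, Finset.sum_mul_sum, Finset.sum_mul]
    refine Finset.sum_congr rfl fun i _ => ?_
    rw [Finset.sum_mul]
  calc (0:ℝ) ≤ (∑ i, c i * (1 - Real.cos (t i * l))) ^ 2 * l ^ (-1 - α)
        + (∑ i, c i * Real.sin (t i * l)) ^ 2 * l ^ (-1 - α) := by positivity
    _ = ∑ i, ∑ j, f i j l := by
        rw [← hsq (fun i => c i * (1 - Real.cos (t i * l))),
          ← hsq (fun i => c i * Real.sin (t i * l)),
          ← Finset.sum_add_distrib]
        refine Finset.sum_congr rfl fun i _ => ?_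
        rw [← Finset.sum_add_distrib]
        refine Finset.sum_congr rfl fun j _ => ?_
        rw [hptkey i j]
        ring

end FbmAux

/-- The fBm covariance `R(t,s) = ½(t^{2H}+s^{2H}-|t-s|^{2H})` is positive
semidefinite on `[0,1]²` for `H ∈ (0,1]`. -/
theorem fbm_covariance_posSemidef (H : ℝ) (hH : H ∈ Set.Ioc (0:ℝ) 1)
    (n : ℕ) (t : Fin n → ℝ) (ht : ∀ i, t i ∈ Set.Icc (0:ℝ) 1) (c : Fin n → ℝ) :
    0 ≤ ∑ i, ∑ j,
      c i * c j * ((1/2) * ((t i) ^ (2*H) + (t j) ^ (2*H) - |t i - t j| ^ (2*H))) := by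
  have hα : 0 < 2 * H := by have := hH.1; positivity
  have hhalf : (∑ i, ∑ j, c i * c j *
        ((1/2) * ((t i) ^ (2*H) + (t j) ^ (2*H) - |t i - t j| ^ (2*H))))
      = (1/2) * ∑ i, ∑ j, c i * c j *
        ((t i) ^ (2*H) + (t j) ^ (2*H) - |t i - t j| ^ (2*H)) := by
    rw [Finset.mul_sum]
    refine Finset.sum_congr rfl fun i _ => ?_
    rw [Finset.mul_sum]
    exact Finset.sum_congr rfl fun j _ => by ring
  rw [hhalf]
  have key : 0 ≤ ∑ i, ∑ j, c i * c j *
      ((t i) ^ (2*H) + (t j) ^ (2*H) - |t i - t j| ^ (2*H)) := by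
    rcases eq_or_lt_of_le hH.2 with hH1 | hH1
    · have hterm : ∀ i j, c i * c j * ((t i) ^ (2*H) + (t j) ^ (2*H) - |t i - t j| ^ (2*H))
          = (c i * t i) * (c j * t j) * 2 := by
        intro i j
        rw [hH1]
        rw [show ((2:ℝ) * 1 = ((2:ℕ):ℝ)) by norm_num]
        rw [Real.rpow_natCast, Real.rpow_natCast, Real.rpow_natCast, sq_abs]
        ring
      calc (0:ℝ) ≤ (∑ i, c i * t i) ^ 2 * 2 := by positivity
        _ = ∑ i, ∑ j, c i * c j * ((t i) ^ (2*H) + (t j) ^ (2*H) - |t i - t j| ^ (2*H)) := by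
            rw [sq, Finset.sum_mul_sum, Finset.sum_mul]
            refine Finset.sum_congr rfl fun i _ => ?_
            rw [Finset.sum_mul]
            exact Finset.sum_congr rfl fun j _ => (hterm i j).symm
    · exact FbmAux.sum_nonneg_aux hα (by linarith) t c (fun i => (ht i).1)
  linarith
end

section
/- Young–Lóeve type bilinear estimate for partitions: if h : [0,1] → ℝ has finite q-variation and f : [0,1] → ℝ has finite p-variation with 1/p + 1/q > 1, then for any partition s = t_0 < ... < t_k = t, |Σ_i f(t_i)(h(t_{i+1}) - h(t_i)) - f(s)(h(t) - h(s))| ≤ C_{p,q} ‖f‖_{p-var;[s,t]} ‖h‖_{q-var;[s,t]}, where C_{p,q} = ζ(1/p + 1/q) is a finite constant depending only on p and q. -/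
open scoped ENNReal

/-- The `p`-th power of the `p`-variation of a path `x` on `[s,t]`. -/
noncomputable def pVarPow {E : Type*} [PseudoMetricSpace E] (p : ℝ) (x : ℝ → E)
    (s t : ℝ) : ℝ≥0∞ :=
  ⨆ (k : ℕ) (π : Fin (k+1) → ℝ) (_ : Monotone π) (_ : π 0 = s) (_ : π (Fin.last k) = t),
    ∑ i : Fin k, (ENNReal.ofReal (dist (x (π i.castSucc)) (x (π i.succ)))) ^ p

/-- Any sum of `pp`-th powers of increments along (part of) a partition is bounded by the
`pp`-variation (to the power `pp`). -/
lemma sum_abs_rpow_le_pVar {x : ℝ → ℝ} {pp s t : ℝ} (hpp : 0 ≤ pp)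
    (hfin : pVarPow pp x s t < ⊤) (π : ℕ → ℝ) (hmono : Monotone π)
    (k : ℕ) (h0 : π 0 = s) (hk : π k = t) (I : Finset ℕ) (hI : I ⊆ Finset.range k) :
    ∑ j ∈ I, |x (π (j+1)) - x (π j)| ^ pp ≤ (pVarPow pp x s t).toReal := by
  have hsub : ∑ j ∈ I, |x (π (j+1)) - x (π j)| ^ pp
      ≤ ∑ j ∈ Finset.range k, |x (π (j+1)) - x (π j)| ^ pp :=
    Finset.sum_le_sum_of_subset_of_nonneg hI
      (fun j _ _ => Real.rpow_nonneg (abs_nonneg _) _)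
  refine hsub.trans ?_
  have key : ENNReal.ofReal (∑ j ∈ Finset.range k, |x (π (j+1)) - x (π j)| ^ pp)
      ≤ pVarPow pp x s t := by
    rw [ENNReal.ofReal_sum_of_nonneg (fun j _ => Real.rpow_nonneg (abs_nonneg _) _)]
    have hterm : ∀ j : ℕ, ENNReal.ofReal (|x (π (j+1)) - x (π j)| ^ pp)
        = (ENNReal.ofReal (dist (x (π j)) (x (π (j+1))))) ^ pp := by
      intro j
      rw [ENNReal.ofReal_rpow_of_nonneg dist_nonneg hpp, Real.dist_eq, abs_sub_comm]
    simp only [hterm]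
    set π' : Fin (k+1) → ℝ := fun i => π i.val with hπ'
    have hmono' : Monotone π' := fun i j hij => hmono hij
    have h0' : π' 0 = s := by simpa [hπ'] using h0
    have hk' : π' (Fin.last k) = t := by simpa [hπ'] using hk
    have hsum : ∑ j ∈ Finset.range k, (ENNReal.ofReal (dist (x (π j)) (x (π (j+1))))) ^ pp
        = ∑ i : Fin k, (ENNReal.ofReal (dist (x (π' i.castSucc)) (x (π' i.succ)))) ^ pp := by
      rw [← Fin.sum_univ_eq_sum_range
        (fun j => (ENNReal.ofReal (dist (x (π j)) (x (π (j+1))))) ^ pp) k]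
      rfl
    rw [hsum, pVarPow]
    exact le_iSup_of_le k (le_iSup_of_le π' (le_iSup_of_le hmono'
      (le_iSup_of_le h0' (le_iSup_of_le hk' le_rfl))))
  have h2 := ENNReal.toReal_mono hfin.ne key
  rwa [ENNReal.toReal_ofReal
    (Finset.sum_nonneg fun j _ => Real.rpow_nonneg (abs_nonneg _) _)] at h2

/-- Removing one interior point of a partition changes the Riemann sum by
`(f(t_{j0+1}) - f(t_{j0})) * (h(t_{j0+2}) - h(t_{j0+1}))`. -/
lemma removal_identity (f h : ℝ → ℝ) (π τ : ℕ → ℝ) (j0 : ℕ)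
    (hτ : ∀ j, τ j = if j ≤ j0 then π j else π (j+1)) :
    ∀ m : ℕ, j0 + 1 ≤ m →
      ∑ j ∈ Finset.range (m+1), f (π j) * (h (π (j+1)) - h (π j))
        = (∑ j ∈ Finset.range m, f (τ j) * (h (τ (j+1)) - h (τ j)))
          + (f (π (j0+1)) - f (π j0)) * (h (π (j0+2)) - h (π (j0+1))) := by
  intro m hm
  induction m, hm using Nat.le_induction with
  | base =>
    have hsplit : ∑ j ∈ Finset.range (j0+1), f (τ j) * (h (τ (j+1)) - h (τ j))
        = (∑ j ∈ Finset.range j0, f (π j) * (h (π (j+1)) - h (π j)))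
          + f (π j0) * (h (π (j0+2)) - h (π j0)) := by
      rw [Finset.sum_range_succ]
      congr 1
      · refine Finset.sum_congr rfl fun j hj => ?_
        rw [Finset.mem_range] at hj
        rw [hτ j, hτ (j+1), if_pos (by omega), if_pos (by omega)]
      · rw [hτ j0, hτ (j0+1), if_pos le_rfl, if_neg (by omega)]
    rw [Finset.sum_range_succ, Finset.sum_range_succ, hsplit]
    ring
  | succ m hm ih =>
    rw [Finset.sum_range_succ, ih, Finset.sum_range_succ,
      hτ m, hτ (m+1), if_neg (by omega), if_neg (by omega)]
    ring

/-- Pigeonhole combined with Hölder's inequality: among `n+1` pairs of increments there is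
one whose product is at most `(n+1)^{-(1/p+1/q)}` times the product of variations. -/
lemma exists_small_product (p q : ℝ) (hp : 1 ≤ p) (hq : 1 ≤ q)
    (hpq : 1 < 1/p + 1/q) (n : ℕ) (a b : ℕ → ℝ)
    (ha : ∀ j, 0 ≤ a j) (hb : ∀ j, 0 ≤ b j) (Wf Wh : ℝ) (hWf : 0 ≤ Wf) (hWh : 0 ≤ Wh)
    (hA : ∑ j ∈ Finset.range (n+1), a j ^ p ≤ Wf)
    (hB : ∑ j ∈ Finset.range (n+1), b j ^ q ≤ Wh) :
    ∃ j ∈ Finset.range (n+1),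
      a j * b j ≤ ((n:ℝ)+1) ^ (-(1/p + 1/q)) * (Wf ^ (1/p) * Wh ^ (1/q)) := by
  set r : ℝ := 1/p + 1/q with hr
  have hp0 : 0 < p := by linarith
  have hq0 : 0 < q := by linarith
  have hr1 : 1 < r := hpq
  have hr0 : 0 < r := by linarith
  set θ : ℝ := 1/r with hθ
  have hθ0 : 0 < θ := by positivity
  have hθr : θ * r = 1 := by rw [hθ]; field_simp
  have hconj : Real.HolderConjugate (p*r) (q*r) := by
    rw [Real.holderConjugate_iff]
    constructor
    · nlinarith
    · rw [hr]; field_simp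
  have hold := Real.inner_le_Lp_mul_Lq (Finset.range (n+1))
    (fun j => a j ^ θ) (fun j => b j ^ θ) hconj
  have e1 : ∀ j : ℕ, |a j ^ θ| ^ (p*r) = a j ^ p := by
    intro j
    rw [abs_of_nonneg (Real.rpow_nonneg (ha j) θ), ← Real.rpow_mul (ha j)]
    congr 1
    rw [hθ]; field_simp
  have e2 : ∀ j : ℕ, |b j ^ θ| ^ (q*r) = b j ^ q := by
    intro j
    rw [abs_of_nonneg (Real.rpow_nonneg (hb j) θ), ← Real.rpow_mul (hb j)]
    congr 1
    rw [hθ]; field_simp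
  simp only [e1, e2] at hold
  have hAn : (0:ℝ) ≤ ∑ j ∈ Finset.range (n+1), a j ^ p :=
    Finset.sum_nonneg fun j _ => Real.rpow_nonneg (ha j) p
  have hBn : (0:ℝ) ≤ ∑ j ∈ Finset.range (n+1), b j ^ q :=
    Finset.sum_nonneg fun j _ => Real.rpow_nonneg (hb j) q
  have hbound : ∑ j ∈ Finset.range (n+1), a j ^ θ * b j ^ θ
      ≤ Wf ^ (1/(p*r)) * Wh ^ (1/(q*r)) := by
    refine hold.trans (mul_le_mul ?_ ?_ (Real.rpow_nonneg hBn _) (Real.rpow_nonneg hWf _))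
    · exact Real.rpow_le_rpow hAn hA (by positivity)
    · exact Real.rpow_le_rpow hBn hB (by positivity)
  obtain ⟨j0, hj0mem, hj0min⟩ := Finset.exists_min_image (Finset.range (n+1))
    (fun j => a j * b j) ⟨0, by simp⟩
  refine ⟨j0, hj0mem, ?_⟩
  have habn : 0 ≤ a j0 * b j0 := mul_nonneg (ha j0) (hb j0)
  have hcard : ((n:ℝ)+1) * (a j0 * b j0) ^ θ
      ≤ ∑ j ∈ Finset.range (n+1), a j ^ θ * b j ^ θ := by
    have hterm : ∀ j ∈ Finset.range (n+1), (a j0 * b j0) ^ θ ≤ a j ^ θ * b j ^ θ := by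
      intro j hj
      rw [← Real.mul_rpow (ha j) (hb j)]
      exact Real.rpow_le_rpow habn (hj0min j hj) hθ0.le
    calc ((n:ℝ)+1) * (a j0 * b j0) ^ θ
        = ∑ _j ∈ Finset.range (n+1), (a j0 * b j0) ^ θ := by
          rw [Finset.sum_const, Finset.card_range]; push_cast; ring
      _ ≤ _ := Finset.sum_le_sum hterm
  have hkey : (a j0 * b j0) ^ θ ≤ (Wf ^ (1/(p*r)) * Wh ^ (1/(q*r))) / ((n:ℝ)+1) := by
    rw [le_div_iff₀ (by positivity)]
    calc (a j0 * b j0) ^ θ * ((n:ℝ)+1) = ((n:ℝ)+1) * (a j0 * b j0) ^ θ := by ring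
      _ ≤ _ := hcard.trans hbound
  have hpow := Real.rpow_le_rpow (Real.rpow_nonneg habn θ) hkey hr0.le
  rw [← Real.rpow_mul habn, hθr, Real.rpow_one] at hpow
  refine hpow.trans (le_of_eq ?_)
  rw [Real.div_rpow (by positivity) (by positivity),
    Real.mul_rpow (Real.rpow_nonneg hWf _) (Real.rpow_nonneg hWh _),
    ← Real.rpow_mul hWf, ← Real.rpow_mul hWh, Real.rpow_neg (by positivity),
    div_eq_mul_inv]
  have h1 : 1/(p*r) * r = 1/p := by field_simp
  have h2 : 1/(q*r) * r = 1/q := by field_simp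
  rw [h1, h2]
  ring

/-- The Young–Lóeve estimate for partitions indexed by `ℕ`, proved by induction on the number
of intervals: one successively removes the interior point with the smallest product of
adjacent increments. -/
lemma young_aux (p q : ℝ) (hp : 1 ≤ p) (hq : 1 ≤ q) (hpq : 1 < 1/p + 1/q)
    (f h : ℝ → ℝ) (s t : ℝ)
    (hf : pVarPow p f s t < ⊤) (hh : pVarPow q h s t < ⊤) :
    ∀ m : ℕ, ∀ π : ℕ → ℝ, Monotone π → π 0 = s → (∀ j, m ≤ j → π j = t) →
      |∑ j ∈ Finset.range m, f (π j) * (h (π (j+1)) - h (π j)) - f s * (h t - h s)|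
        ≤ (∑ j ∈ Finset.range (m-1), ((j:ℝ)+1) ^ (-(1/p+1/q)))
          * ((pVarPow p f s t).toReal ^ (1/p) * (pVarPow q h s t).toReal ^ (1/q)) := by
  intro m
  induction m using Nat.strong_induction_on with
  | _ m ih =>
  obtain _ | _ | n := m
  · -- m = 0
    intro π hmono h0 hend
    have hts : t = s := by rw [← hend 0 (le_refl 0), h0]
    simp [hts]
  · -- m = 1
    intro π hmono h0 hend
    have h1t : π 1 = t := hend 1 le_rfl
    simp [Finset.sum_range_one, h0, h1t]
  · -- m = n + 2
    intro π hmono h0 hend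
    have hπt : π (n+2) = t := hend _ le_rfl
    set Wf : ℝ := (pVarPow p f s t).toReal with hWf
    set Wh : ℝ := (pVarPow q h s t).toReal with hWh
    have hA : ∑ j ∈ Finset.range (n+1), |f (π (j+1)) - f (π j)| ^ p ≤ Wf :=
      sum_abs_rpow_le_pVar (by linarith) hf π hmono (n+2) h0 hπt _
        (fun j hj => by simp only [Finset.mem_range] at *; omega)
    have hB : ∑ j ∈ Finset.range (n+1), |h (π (j+2)) - h (π (j+1))| ^ q ≤ Wh := by
      have heq : ∑ j ∈ Finset.range (n+1), |h (π (j+2)) - h (π (j+1))| ^ q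
          = ∑ j ∈ Finset.Ico 1 (n+2), |h (π (j+1)) - h (π j)| ^ q := by
        rw [Finset.sum_Ico_eq_sum_range]
        refine Finset.sum_congr (by norm_num) fun j _ => ?_
        rw [show 1 + j = j + 1 from by omega]
      rw [heq]
      exact sum_abs_rpow_le_pVar (by linarith) hh π hmono (n+2) h0 hπt _
        (fun j hj => by simp only [Finset.mem_Ico, Finset.mem_range] at *; omega)
    obtain ⟨j0, hj0, hsmall⟩ := exists_small_product p q hp hq hpq n
      (fun j => |f (π (j+1)) - f (π j)|) (fun j => |h (π (j+2)) - h (π (j+1))|)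
      (fun j => abs_nonneg _) (fun j => abs_nonneg _) Wf Wh
      ENNReal.toReal_nonneg ENNReal.toReal_nonneg hA hB
    rw [Finset.mem_range] at hj0
    set τ : ℕ → ℝ := fun j => if j ≤ j0 then π j else π (j+1) with hτdef
    have hτ : ∀ j, τ j = if j ≤ j0 then π j else π (j+1) := fun j => rfl
    have hτmono : Monotone τ := by
      intro i j hij
      simp only [hτdef]
      split_ifs with h1 h2 h2
      · exact hmono hij
      · exact hmono (by omega)
      · exfalso; omega
      · exact hmono (by omega)
    have hτ0 : τ 0 = s := by simp only [hτdef, if_pos (Nat.zero_le j0)]; exact h0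
    have hτend : ∀ j, n+1 ≤ j → τ j = t := by
      intro j hj
      simp only [hτdef]
      rw [if_neg (by omega)]
      exact hend _ (by omega)
    have ihτ := ih (n+1) (by omega) τ hτmono hτ0 hτend
    have hid := removal_identity f h π τ j0 hτ (n+1) (by omega)
    have habs : |(f (π (j0+1)) - f (π j0)) * (h (π (j0+2)) - h (π (j0+1)))|
        = |f (π (j0+1)) - f (π j0)| * |h (π (j0+2)) - h (π (j0+1))| := abs_mul _ _
    calc |∑ j ∈ Finset.range (n+2), f (π j) * (h (π (j+1)) - h (π j)) - f s * (h t - h s)|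
        = |(∑ j ∈ Finset.range (n+1), f (τ j) * (h (τ (j+1)) - h (τ j)) - f s * (h t - h s))
            + (f (π (j0+1)) - f (π j0)) * (h (π (j0+2)) - h (π (j0+1)))| := by
          rw [hid]; congr 1; ring
      _ ≤ |∑ j ∈ Finset.range (n+1), f (τ j) * (h (τ (j+1)) - h (τ j)) - f s * (h t - h s)|
            + |(f (π (j0+1)) - f (π j0)) * (h (π (j0+2)) - h (π (j0+1)))| := abs_add_le _ _
      _ ≤ (∑ j ∈ Finset.range n, ((j:ℝ)+1) ^ (-(1/p+1/q))) * (Wf ^ (1/p) * Wh ^ (1/q))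
            + ((n:ℝ)+1) ^ (-(1/p+1/q)) * (Wf ^ (1/p) * Wh ^ (1/q)) := by
          refine add_le_add ?_ ?_
          · simpa using ihτ
          · rw [habs]; exact hsmall
      _ = (∑ j ∈ Finset.range (n+2-1), ((j:ℝ)+1) ^ (-(1/p+1/q)))
            * (Wf ^ (1/p) * Wh ^ (1/q)) := by
          rw [show n+2-1 = n+1 from rfl, Finset.sum_range_succ]
          ring

/-- Young–Lóeve estimate for Riemann sums along partitions:
`|Σ_i f(t_i)(h(t_{i+1}) - h(t_i)) - f(s)(h(t) - h(s))|
  ≤ ζ(1/p + 1/q) ‖f‖_{p-var;[s,t]} ‖h‖_{q-var;[s,t]}`,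
with `ζ(r) = Σ_{n≥1} n^{-r}` finite since `1/p + 1/q > 1`. -/
theorem young_loeve_partition_estimate (p q : ℝ) (hp : 1 ≤ p) (hq : 1 ≤ q)
    (hpq : 1 < 1/p + 1/q) (f h : ℝ → ℝ) (s t : ℝ) (hst : s ≤ t)
    (hf : pVarPow p f s t < ⊤) (hh : pVarPow q h s t < ⊤) :
    ∀ (k : ℕ) (π : Fin (k+1) → ℝ), Monotone π → π 0 = s → π (Fin.last k) = t →
      ENNReal.ofReal
          |(∑ i : Fin k, f (π i.castSucc) * (h (π i.succ) - h (π i.castSucc))) -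
            f s * (h t - h s)| ≤
        ENNReal.ofReal (∑' n : ℕ, ((n : ℝ) + 1) ^ (-(1/p + 1/q))) *
          (pVarPow p f s t) ^ (1/p) * (pVarPow q h s t) ^ (1/q) := by
  intro k π hmono h0 hlast
  have hp0 : 0 < p := by linarith
  have hq0 : 0 < q := by linarith
  -- extend the partition to a monotone function on `ℕ`
  set π' : ℕ → ℝ := fun j => π ⟨min j k, by omega⟩ with hπ'
  have hmono' : Monotone π' := by
    intro i j hij
    exact hmono (Fin.mk_le_mk.mpr (by omega))
  have h0' : π' 0 = s := by
    have : (⟨min 0 k, by omega⟩ : Fin (k+1)) = 0 := by ext; simp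
    rw [hπ']
    simp only [this]
    exact h0
  have hend' : ∀ j, k ≤ j → π' j = t := by
    intro j hj
    have hmin : (⟨min j k, by omega⟩ : Fin (k+1)) = Fin.last k := by
      ext; simp [Nat.min_eq_right hj]
    rw [hπ']
    simp only [hmin]
    exact hlast
  have hsum : ∑ i : Fin k, f (π i.castSucc) * (h (π i.succ) - h (π i.castSucc))
      = ∑ j ∈ Finset.range k, f (π' j) * (h (π' (j+1)) - h (π' j)) := by
    rw [← Fin.sum_univ_eq_sum_range (fun j => f (π' j) * (h (π' (j+1)) - h (π' j))) k]
    refine Finset.sum_congr rfl fun i _ => ?_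
    have e1 : π' i.val = π i.castSucc := by
      rw [hπ']
      exact congrArg π (by ext; simp [Nat.min_eq_left (le_of_lt i.isLt)])
    have e2 : π' (i.val + 1) = π i.succ := by
      rw [hπ']
      exact congrArg π (by ext; simp [Nat.min_eq_left (Nat.succ_le_of_lt i.isLt)])
    rw [e1, e2]
  have key := young_aux p q hp hq hpq f h s t hf hh k π' hmono' h0' hend'
  rw [hsum]
  -- summability of the zeta-type series
  have hsummable : Summable (fun n : ℕ => ((n:ℝ)+1) ^ (-(1/p+1/q))) := by
    have h1 : Summable (fun n : ℕ => (n:ℝ) ^ (-(1/p+1/q))) :=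
      Real.summable_nat_rpow.2 (by linarith)
    have h2 := (summable_nat_add_iff 1).2 h1
    refine h2.congr fun n => ?_
    push_cast
    ring_nf
  have hC0 : 0 ≤ ∑' n : ℕ, ((n:ℝ)+1) ^ (-(1/p+1/q)) :=
    tsum_nonneg fun n => Real.rpow_nonneg (by positivity) _
  have hpartial : ∑ j ∈ Finset.range (k-1), ((j:ℝ)+1) ^ (-(1/p+1/q))
      ≤ ∑' n : ℕ, ((n:ℝ)+1) ^ (-(1/p+1/q)) :=
    Summable.sum_le_tsum _ (fun i _ => Real.rpow_nonneg (by positivity) _) hsummable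
  -- convert the right-hand side to `ofReal` of a real number
  set Wf : ℝ := (pVarPow p f s t).toReal with hWfdef
  set Wh : ℝ := (pVarPow q h s t).toReal with hWhdef
  have hVf : (pVarPow p f s t) ^ (1/p) = ENNReal.ofReal (Wf ^ (1/p)) := by
    conv_lhs => rw [← ENNReal.ofReal_toReal hf.ne]
    rw [ENNReal.ofReal_rpow_of_nonneg ENNReal.toReal_nonneg (by positivity)]
  have hVh : (pVarPow q h s t) ^ (1/q) = ENNReal.ofReal (Wh ^ (1/q)) := by
    conv_lhs => rw [← ENNReal.ofReal_toReal hh.ne]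
    rw [ENNReal.ofReal_rpow_of_nonneg ENNReal.toReal_nonneg (by positivity)]
  rw [hVf, hVh, ← ENNReal.ofReal_mul hC0,
    ← ENNReal.ofReal_mul (by positivity)]
  refine ENNReal.ofReal_le_ofReal ?_
  calc |∑ j ∈ Finset.range k, f (π' j) * (h (π' (j+1)) - h (π' j)) - f s * (h t - h s)|
      ≤ (∑ j ∈ Finset.range (k-1), ((j:ℝ)+1) ^ (-(1/p+1/q)))
          * (Wf ^ (1/p) * Wh ^ (1/q)) := key
    _ ≤ (∑' n : ℕ, ((n:ℝ)+1) ^ (-(1/p+1/q))) * (Wf ^ (1/p) * Wh ^ (1/q)) := by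
        refine mul_le_mul_of_nonneg_right hpartial (by positivity)
    _ = (∑' n : ℕ, ((n:ℝ)+1) ^ (-(1/p+1/q))) * Wf ^ (1/p) * Wh ^ (1/q) := by ring
end
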